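/- arXiv:0804.2956 — 3 statements merged into one kernel-verified Lean document; each statement's English description precedes it below -/
import Mathlib

section
/- Assume G is connected with at least one edge and that all projected edge vectors P χ_(a,b) (over ordered pairs (a,b) of adjacent vertices) have the same norm c > 0. Let h = dim H, let n be twice the number of edges of G, and let X = { P χ_(a,b) / c : (a,b) an ordered pair of adjacent vertices }, so X lies on the unit sphere of H and X = −X. Then X satisfies the moment conditions of a spherical 3-design in H: (i) ∑_{x ∈ X} x = 0; (ii) for every w ∈ H, ∑_{(a,b)} ⟨P χ_(a,b)/c, w⟩² = (n/h)‖w‖², the sum over all ordered pairs of adjacent vertices; (iii) for all w₁, w₂, w₃ ∈ H, ∑_{(a,b)} ⟨P χ_(a,b)/c, w₁⟩⟨P χ_(a,b)/c, w₂⟩⟨P χ_(a,b)/c, w₃⟩ = 0. -/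
open scoped BigOperators RealInnerProductSpace

noncomputable section

variable {V : Type*} [Fintype V] [DecidableEq V]

/-- The indicator chain `χ_(a,b)`: 1 at `(a,b)`, −1 at `(b,a)`, 0 elsewhere. -/
def edgeChi (a b : V) : EuclideanSpace ℝ (V × V) :=
  WithLp.toLp 2 (fun p => if p = (a, b) then 1 else if p = (b, a) then -1 else 0)

/-- The cycle space `H` of a simple graph `G`: the kernel of the boundary map
restricted to the edge space `C₁`. -/
def cycleSpace (G : SimpleGraph V) : Submodule ℝ (EuclideanSpace ℝ (V × V)) where
  carrier := { f | (∀ u v : V, f (u, v) = - f (v, u)) ∧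
               (∀ u v : V, ¬ G.Adj u v → f (u, v) = 0) ∧
               (∀ v : V, ∑ u : V, f (u, v) = 0) }
  add_mem' := by
    rintro f g ⟨hf1, hf2, hf3⟩ ⟨hg1, hg2, hg3⟩
    refine ⟨fun u v => ?_, fun u v h => ?_, fun v => ?_⟩
    · show f (u, v) + g (u, v) = -(f (v, u) + g (v, u))
      rw [hf1 u v, hg1 u v]; ring
    · show f (u, v) + g (u, v) = 0
      rw [hf2 u v h, hg2 u v h]; ring
    · show ∑ u : V, (f (u, v) + g (u, v)) = 0
      rw [Finset.sum_add_distrib, hf3 v, hg3 v]; ring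
  zero_mem' := by
    refine ⟨fun u v => ?_, fun u v h => ?_, fun v => ?_⟩ <;> simp
  smul_mem' := by
    rintro c f ⟨hf1, hf2, hf3⟩
    refine ⟨fun u v => ?_, fun u v h => ?_, fun v => ?_⟩
    · show c * f (u, v) = -(c * f (v, u))
      rw [hf1 u v]; ring
    · show c * f (u, v) = 0
      rw [hf2 u v h]; ring
    · show ∑ u : V, c * f (u, v) = 0
      rw [← Finset.mul_sum, hf3 v]; ring

/-- The projected edge vector `P χ_(a,b)`, where `P` is the orthogonal projection
onto the cycle space of `G`. -/
def projEdge (G : SimpleGraph V) (a b : V) : EuclideanSpace ℝ (V × V) :=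
  (Submodule.orthogonalProjectionOnto (cycleSpace G) (edgeChi a b) : EuclideanSpace ℝ (V × V))


section Aux
variable {V : Type*} [Fintype V] [DecidableEq V]

lemma edgeChi_swap {a b : V} (hab : a ≠ b) :
    edgeChi b a = - edgeChi (V := V) a b := by
  ext p
  show edgeChi b a p = -(edgeChi a b p)
  unfold edgeChi
  by_cases h1 : p = (b, a)
  · subst h1
    simp [Prod.ext_iff, hab, Ne.symm hab]
  · by_cases h2 : p = (a, b)
    · subst h2
      simp [Prod.ext_iff, hab, Ne.symm hab]
    · simp [h1, h2]

lemma projEdge_mem (G : SimpleGraph V) (a b : V) :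
    projEdge G a b ∈ cycleSpace G := (Submodule.orthogonalProjectionOnto (cycleSpace G) (edgeChi a b)).2

lemma projEdge_swap (G : SimpleGraph V) {a b : V} (hab : b ≠ a) :
    projEdge G b a = - projEdge G a b := by
  unfold projEdge
  rw [edgeChi_swap hab.symm, map_neg]
  simp

lemma inner_projEdge (G : SimpleGraph V) (a b : V) {w : EuclideanSpace ℝ (V × V)}
    (hw : w ∈ cycleSpace G) : ⟪projEdge G a b, w⟫ = ⟪edgeChi a b, w⟫ := by
  have hmem := Submodule.sub_starProjection_mem_orthogonal (K := cycleSpace G) (edgeChi a b)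
  have h0 : ⟪w, edgeChi a b - projEdge G a b⟫ = 0 :=
    (Submodule.mem_orthogonal _ _).1 hmem w hw
  have h0' : ⟪edgeChi a b - projEdge G a b, w⟫ = 0 := by
    rw [real_inner_comm]; exact h0
  rw [inner_sub_left] at h0'
  linarith

lemma inner_edgeChi (G : SimpleGraph V) {a b : V} (hab : a ≠ b)
    {w : EuclideanSpace ℝ (V × V)} (hw : w ∈ cycleSpace G) :
    ⟪edgeChi a b, w⟫ = 2 * w (a, b) := by
  have hsum : ⟪edgeChi (V := V) a b, w⟫ = ∑ p : V × V, edgeChi a b p * w p := by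
    simp [PiLp.inner_apply, RCLike.inner_apply, conj_trivial]
    exact Finset.sum_congr rfl fun _ _ => mul_comm _ _
  rw [hsum]
  have hpt : ∀ p : V × V, edgeChi a b p * w p =
      (if p = (a, b) then w (a, b) else 0) + (if p = (b, a) then -(w (b, a)) else 0) := by
    intro p
    by_cases h1 : p = (a, b)
    · subst h1
      simp [edgeChi, Prod.ext_iff, hab, Ne.symm hab]
    · by_cases h2 : p = (b, a)
      · subst h2
        simp [edgeChi, Prod.ext_iff, hab, Ne.symm hab]
      · simp [edgeChi, h1, h2]
  rw [Finset.sum_congr rfl (fun p _ => hpt p), Finset.sum_add_distrib,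
    Finset.sum_ite_eq' Finset.univ, Finset.sum_ite_eq' Finset.univ]
  have := hw.1 b a
  simp only [Finset.mem_univ, if_true]
  rw [this]; ring

lemma norm_sq_cycle (G : SimpleGraph V) [DecidableRel G.Adj] {w : EuclideanSpace ℝ (V × V)}
    (hw : w ∈ cycleSpace G) :
    ‖w‖ ^ 2 = ∑ p ∈ Finset.univ.filter (fun p : V × V => G.Adj p.1 p.2), w p ^ 2 := by
  have h1 : ‖w‖ ^ 2 = ∑ p : V × V, w p ^ 2 := by
    rw [EuclideanSpace.norm_sq_eq]
    simp [PiLp.inner_apply, RCLike.inner_apply, conj_trivial, sq]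
  rw [h1]
  symm
  apply Finset.sum_subset (Finset.filter_subset _ _)
  intro p _ hp
  have hadj : ¬ G.Adj p.1 p.2 := by simpa using hp
  have := hw.2.1 p.1 p.2 hadj
  simp only [Prod.mk.eta] at this
  rw [this]; ring

lemma parseval_cycle (G : SimpleGraph V) {m : ℕ}
    (bB : OrthonormalBasis (Fin m) ℝ ↥(cycleSpace G))
    {w : EuclideanSpace ℝ (V × V)} (hw : w ∈ cycleSpace G) :
    ‖w‖ ^ 2 = ∑ i, ⟪w, (bB i : EuclideanSpace ℝ (V × V))⟫ ^ 2 := by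
  have key := bB.sum_inner_mul_inner (⟨w, hw⟩ : cycleSpace G) ⟨w, hw⟩
  have h1 : ∀ i : Fin m, ⟪(⟨w, hw⟩ : cycleSpace G), bB i⟫ = ⟪w, (bB i : EuclideanSpace ℝ (V × V))⟫ :=
    fun i => rfl
  have h2 : ∀ i : Fin m, ⟪bB i, (⟨w, hw⟩ : cycleSpace G)⟫ = ⟪w, (bB i : EuclideanSpace ℝ (V × V))⟫ :=
    fun i => real_inner_comm _ _
  have h3 : ⟪(⟨w, hw⟩ : cycleSpace G), (⟨w, hw⟩ : cycleSpace G)⟫ = ‖w‖ ^ 2 := by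
    rw [real_inner_self_eq_norm_sq]; rfl
  rw [h3] at key
  rw [← key]
  exact Finset.sum_congr rfl fun i _ => by rw [h1 i, h2 i, sq]

end Aux

/-- **Lemma 1.2, forward direction.** If all projected edge vectors of a connected graph
have the same norm `c > 0`, then the normalized vectors satisfy the first, second and
third moment conditions of a spherical 3-design in the cycle space `H`. -/
theorem equal_norms_imp_design_moments
    {V : Type*} [Fintype V] [DecidableEq V] (G : SimpleGraph V) [DecidableRel G.Adj]
    (hconn : G.Connected) (hne : ∃ a b : V, G.Adj a b)
    (c : ℝ) (hc : 0 < c)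
    (hnorm : ∀ a b : V, G.Adj a b → ‖projEdge G a b‖ = c)
    (h n : ℕ) (hh : h = Module.finrank ℝ (cycleSpace G))
    (hn : n = 2 * G.edgeFinset.card)
    (X : Set (EuclideanSpace ℝ (V × V)))
    (hX : X = { x | ∃ a b : V, G.Adj a b ∧ x = c⁻¹ • projEdge G a b }) :
    (∑ᶠ x ∈ X, x = 0) ∧
    (∀ w ∈ cycleSpace G,
      ∑ p ∈ Finset.univ.filter (fun p : V × V => G.Adj p.1 p.2),
        (⟪c⁻¹ • projEdge G p.1 p.2, w⟫) ^ 2 = ((n : ℝ) / (h : ℝ)) * ‖w‖ ^ 2) ∧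
    (∀ w₁ ∈ cycleSpace G, ∀ w₂ ∈ cycleSpace G, ∀ w₃ ∈ cycleSpace G,
      ∑ p ∈ Finset.univ.filter (fun p : V × V => G.Adj p.1 p.2),
        ⟪c⁻¹ • projEdge G p.1 p.2, w₁⟫ * ⟪c⁻¹ • projEdge G p.1 p.2, w₂⟫ *
          ⟪c⁻¹ • projEdge G p.1 p.2, w₃⟫ = 0) := by
  classical
  subst hX hh hn
  set F := Finset.univ.filter (fun p : V × V => G.Adj p.1 p.2) with hF
  have hFadj : ∀ p ∈ F, G.Adj p.1 p.2 := fun p hp => by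
    rw [hF, Finset.mem_filter] at hp; exact hp.2
  set h' := Module.finrank ℝ ↥(cycleSpace G) with hh'
  -- key1 : second moment against the unprojected vectors
  have key1 : ∀ w ∈ cycleSpace G,
      ∑ p ∈ F, ⟪projEdge G p.1 p.2, w⟫ ^ 2 = 4 * ‖w‖ ^ 2 := by
    intro w hw
    have hterm : ∀ p ∈ F, ⟪projEdge G p.1 p.2, w⟫ ^ 2 = 4 * w p ^ 2 := by
      rintro ⟨a, b⟩ hp
      have hadj : G.Adj a b := hFadj _ hp
      rw [inner_projEdge G a b hw, inner_edgeChi G hadj.ne hw]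
      ring
    rw [Finset.sum_congr rfl hterm, ← Finset.mul_sum, norm_sq_cycle G hw]
  set bB := stdOrthonormalBasis ℝ ↥(cycleSpace G) with hbB
  have hb_mem : ∀ i, ((bB i : ↥(cycleSpace G)) : EuclideanSpace ℝ (V × V)) ∈ cycleSpace G :=
    fun i => (bB i).2
  have hb_norm : ∀ i, ‖((bB i : ↥(cycleSpace G)) : EuclideanSpace ℝ (V × V))‖ = 1 := by
    intro i
    have h1 := bB.orthonormal.1 i
    exact h1
  have key2 : (F.card : ℝ) * c ^ 2 = 4 * (h' : ℝ) := by
    have e1 : ∑ p ∈ F, ‖projEdge G p.1 p.2‖ ^ 2 = (F.card : ℝ) * c ^ 2 := by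
      rw [Finset.sum_congr rfl (fun p hp => by rw [hnorm p.1 p.2 (hFadj p hp)]),
        Finset.sum_const, nsmul_eq_mul]
    have e2 : ∑ p ∈ F, ‖projEdge G p.1 p.2‖ ^ 2 = 4 * (h' : ℝ) := by
      have hpars : ∀ p ∈ F, ‖projEdge G p.1 p.2‖ ^ 2 =
          ∑ i, ⟪projEdge G p.1 p.2, ((bB i : ↥(cycleSpace G)) : EuclideanSpace ℝ (V × V))⟫ ^ 2 :=
        fun p _ => parseval_cycle G bB (projEdge_mem G p.1 p.2)
      rw [Finset.sum_congr rfl hpars, Finset.sum_comm]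
      have hcol : ∀ i ∈ Finset.univ, ∑ p ∈ F,
          ⟪projEdge G p.1 p.2, ((bB i : ↥(cycleSpace G)) : EuclideanSpace ℝ (V × V))⟫ ^ 2
          = (4 : ℝ) := by
        intro i _
        rw [key1 _ (hb_mem i), hb_norm i]
        norm_num
      rw [Finset.sum_congr rfl hcol, Finset.sum_const, nsmul_eq_mul]
      simp only [Finset.card_univ, Fintype.card_fin]
      ring
    linarith [e1, e2]
  have hFpos : 0 < F.card := by
    obtain ⟨a, b, hab⟩ := hne
    exact Finset.card_pos.2 ⟨(a, b), by rw [hF]; simp [hab]⟩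
  have hh'pos : (0 : ℝ) < (h' : ℝ) := by
    have h1 : (0 : ℝ) < (F.card : ℝ) * c ^ 2 :=
      mul_pos (by exact_mod_cast hFpos) (pow_pos hc 2)
    linarith [key2]
  have hcard : F.card = 2 * G.edgeFinset.card := by
    rw [hF, ← SimpleGraph.sum_degrees_eq_twice_card_edges, Finset.card_filter,
      ← Finset.univ_product_univ, Finset.sum_product]
    refine Finset.sum_congr rfl fun a _ => ?_
    rw [← Finset.card_filter]
    unfold SimpleGraph.degree
    congr 1
    ext b
    simp [SimpleGraph.mem_neighborFinset]
  have hratio : ((2 * G.edgeFinset.card : ℕ) : ℝ) / (h' : ℝ) = 4 / c ^ 2 := by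
    rw [← hcard]
    rw [div_eq_div_iff (ne_of_gt hh'pos) (by positivity)]
    linarith [key2]
  refine ⟨?_, ?_, ?_⟩
  · -- first moment
    have hXeq : {x | ∃ a b : V, G.Adj a b ∧ x = c⁻¹ • projEdge G a b} =
        ↑(F.image fun p : V × V => c⁻¹ • projEdge G p.1 p.2) := by
      ext x
      simp only [Set.mem_setOf_eq, Finset.coe_image, Set.mem_image, Finset.mem_coe, hF,
        Finset.mem_filter, Finset.mem_univ, true_and]
      constructor
      · rintro ⟨a, b, hab, rfl⟩; exact ⟨(a, b), hab, rfl⟩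
      · rintro ⟨⟨a, b⟩, hab, rfl⟩; exact ⟨a, b, hab, rfl⟩
    rw [hXeq, finsum_mem_coe_finset]
    refine Finset.sum_involution (f := fun x => x) (fun x _ => -x)
      (fun x _ => by simp) (fun x _ hx0 => ?_) (fun x hx => ?_) (fun x hx => by simp)
    · intro heq
      apply hx0
      have h2 : x + x = 0 := by
        nth_rewrite 1 [← heq]
        exact neg_add_cancel x
      have h3 : (2 : ℝ) • x = 0 := by rw [two_smul]; exact h2
      have := smul_eq_zero.1 h3
      rcases this with h | h
      · norm_num at h
      · exact h
    · rw [Finset.mem_image] at hx ⊢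
      obtain ⟨p, hp, rfl⟩ := hx
      have hadj : G.Adj p.1 p.2 := hFadj _ hp
      refine ⟨(p.2, p.1), by rw [hF] at hp ⊢; simpa [G.adj_comm] using hp, ?_⟩
      show c⁻¹ • projEdge G p.2 p.1 = -(c⁻¹ • projEdge G p.1 p.2)
      rw [projEdge_swap G hadj.ne', smul_neg]
  · -- second moment
    intro w hw
    have hterm : ∀ p ∈ F, ⟪c⁻¹ • projEdge G p.1 p.2, w⟫ ^ 2 =
        c⁻¹ ^ 2 * ⟪projEdge G p.1 p.2, w⟫ ^ 2 := by
      intro p _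
      rw [real_inner_smul_left]; ring
    rw [Finset.sum_congr rfl hterm, ← Finset.mul_sum, key1 w hw, hratio]
    field_simp
  · -- third moment
    intro w₁ hw₁ w₂ hw₂ w₃ hw₃
    set f : V × V → ℝ := fun p =>
      ⟪c⁻¹ • projEdge G p.1 p.2, w₁⟫ * ⟪c⁻¹ • projEdge G p.1 p.2, w₂⟫ *
        ⟪c⁻¹ • projEdge G p.1 p.2, w₃⟫ with hf
    have hswap : ∀ p ∈ F, f p = - f p.swap := by
      rintro ⟨a, b⟩ hp
      have hadj : G.Adj a b := hFadj _ hp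
      have hpe : projEdge G b a = - projEdge G a b := projEdge_swap G hadj.ne'
      simp only [hf, Prod.swap_prod_mk, hpe, smul_neg, inner_neg_left]
      ring
    have hsum : ∑ p ∈ F, f p.swap = ∑ p ∈ F, f p := by
      refine Finset.sum_equiv (Equiv.prodComm V V) (fun p => ?_) (fun p hp => rfl)
      rw [hF]
      simp only [Finset.mem_filter, Finset.mem_univ, true_and, Equiv.prodComm_apply,
        Prod.fst_swap, Prod.snd_swap]
      exact G.adj_comm _ _
    have hzero : ∑ p ∈ F, f p = - ∑ p ∈ F, f p := by
      nth_rewrite 1 [Finset.sum_congr rfl hswap]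
      rw [Finset.sum_neg_distrib, hsum]
    linarith [hzero]

end
end

section
/- Let m ≥ 4 and let G be the complete graph on a finite vertex set V with |V| = m. Then for every ordered pair (a,b) of distinct vertices, ‖P χ_(a,b)‖² = 2(m−2)/m. Moreover, for ordered pairs (a,b) and (c,d) of distinct vertices with {a,b} ≠ {c,d}, the normalized inner product ⟨P χ_(a,b), P χ_(c,d)⟩ / (‖P χ_(a,b)‖·‖P χ_(c,d)‖) equals: 1/(m−2) if exactly one endpoint is shared and it is the head of one pair and the tail of the other (b = c with a ≠ d, or a = d with b ≠ c); −1/(m−2) if exactly one endpoint is shared and it is the tail of both or the head of both (a = c with b ≠ d, or b = d with a ≠ c); and 0 if {a,b} ∩ {c,d} = ∅; while for (c,d) = (b,a) the normalized inner product is −1. -/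
open scoped BigOperators RealInnerProductSpace

noncomputable section

variable {V : Type*} [Fintype V] [DecidableEq V]

def gfun (a b : V) (x : V) : ℝ := (if x = b then 1 else 0) - (if x = a then 1 else 0)

def qvec (m : ℕ) (a b : V) : EuclideanSpace ℝ (V × V) :=
  WithLp.toLp 2 (fun p => edgeChi a b p - (gfun a b p.2 - gfun a b p.1) / m)

lemma sum_gfun (a b : V) : ∑ u : V, gfun a b u = 0 := by
  simp [gfun, Finset.sum_sub_distrib]

lemma edgeChi_eval (a b u v : V) (hab : a ≠ b) :
    edgeChi a b (u, v) = (if u = a ∧ v = b then (1:ℝ) else 0) -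
      (if u = b ∧ v = a then 1 else 0) := by
  simp only [edgeChi, Prod.mk.injEq]
  split_ifs <;> simp_all

lemma sum_edgeChi (a b v : V) (hab : a ≠ b) :
    ∑ u : V, edgeChi a b (u, v) = gfun a b v := by
  simp only [edgeChi_eval a b _ v hab, Finset.sum_sub_distrib, gfun]
  congr 1
  · rcases eq_or_ne v b with rfl | hne
    · simp [Finset.sum_ite_eq']
    · simp [hne]
  · rcases eq_or_ne v a with rfl | hne
    · simp [Finset.sum_ite_eq']
    · simp [hne]

lemma qvec_mem (m : ℕ) (hm : (m:ℝ) ≠ 0) (hcard : Fintype.card V = m)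
    {a b : V} (hab : a ≠ b) : qvec m a b ∈ cycleSpace (⊤ : SimpleGraph V) := by
  refine ⟨fun u v => ?_, fun u v h => ?_, fun v => ?_⟩
  · show qvec m a b (u, v) = - qvec m a b (v, u)
    simp only [qvec, edgeChi, Prod.mk.injEq, Prod.ext_iff]
    split_ifs
    all_goals try ring
    all_goals exfalso
    all_goals casesm* _ ∧ _
    all_goals subst_vars
    all_goals simp_all
  · show qvec m a b (u, v) = 0
    have huv : u = v := by simpa using h
    subst huv
    simp only [qvec, edgeChi, Prod.mk.injEq, Prod.ext_iff]
    split_ifs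
    all_goals try ring
    all_goals exfalso
    all_goals casesm* _ ∧ _
    all_goals subst_vars
    all_goals simp_all
  · show ∑ u : V, qvec m a b (u, v) = 0
    simp only [qvec]
    rw [Finset.sum_sub_distrib, sum_edgeChi a b v hab, ← Finset.sum_div,
      Finset.sum_sub_distrib, sum_gfun, Finset.sum_const, Finset.card_univ, hcard,
      nsmul_eq_mul]
    field_simp
    ring

lemma chi_sub_qvec_orth (m : ℕ) (G : SimpleGraph V) (a b : V) :
    ∀ w ∈ cycleSpace G, ⟪edgeChi a b - qvec m a b, w⟫ = 0 := by
  rintro w ⟨h1, h2, h3⟩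
  have hw : ∀ u : V, ∑ v : V, w (u, v) = 0 := by
    intro u
    have : ∑ v : V, w (u, v) = ∑ v : V, -w (v, u) := by
      apply Finset.sum_congr rfl; intro v _; exact h1 u v
    rw [this, Finset.sum_neg_distrib, h3 u, neg_zero]
  have hsub : ∀ p : V × V, (edgeChi a b - qvec m a b) p
      = (gfun a b p.2 - gfun a b p.1) / m := by
    intro p; show edgeChi a b p - qvec m a b p = _; simp [qvec]
  simp only [PiLp.inner_apply, RCLike.inner_apply, starRingEnd_apply, star_trivial]
  rw [Fintype.sum_prod_type]
  have step : ∀ u : V, ∑ v : V, (edgeChi a b - qvec m a b) (u, v) * w (u, v)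
      = (∑ v : V, gfun a b v * w (u, v)) / m := by
    intro u
    have hpt : ∀ v : V, (edgeChi a b - qvec m a b) (u, v) * w (u, v)
        = gfun a b v * w (u, v) / m - gfun a b u / m * w (u, v) := by
      intro v; rw [hsub]; ring
    simp only [hpt]
    rw [Finset.sum_sub_distrib, ← Finset.mul_sum, hw u, mul_zero, sub_zero, Finset.sum_div]
  conv_lhs => enter [2, u, 2, v]; rw [mul_comm]
  simp only [step]
  rw [← Finset.sum_div, Finset.sum_comm]
  have hz : ∀ v : V, ∑ u : V, gfun a b v * w (u, v) = 0 := fun v => by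
    rw [← Finset.mul_sum, h3 v, mul_zero]
  simp [hz]

lemma projEdge_eq (m : ℕ) (hm : (m:ℝ) ≠ 0) (hcard : Fintype.card V = m)
    {a b : V} (hab : a ≠ b) :
    projEdge (⊤ : SimpleGraph V) a b = qvec m a b :=
  (Submodule.starProjection_apply _ _).symm.trans
    (Submodule.eq_starProjection_of_mem_of_inner_eq_zero (qvec_mem m hm hcard hab)
    (chi_sub_qvec_orth m ⊤ a b))

lemma inner_chi_right (f : EuclideanSpace ℝ (V × V)) {c d : V} (hcd : c ≠ d) :
    ⟪f, edgeChi c d⟫ = f (c, d) - f (d, c) := by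
  simp only [PiLp.inner_apply, RCLike.inner_apply, starRingEnd_apply, star_trivial]
  have hpt : ∀ p : V × V, f p * edgeChi c d p
      = (if p = (c, d) then f p else 0) - (if p = (d, c) then f p else 0) := by
    intro p
    simp only [edgeChi]
    split_ifs
    all_goals try ring
    all_goals (exfalso; subst_vars; simp_all [Prod.ext_iff])
  conv_lhs => enter [2, p]; rw [mul_comm]
  simp only [hpt]
  rw [Finset.sum_sub_distrib]
  simp [Finset.sum_ite_eq']

lemma inner_qq (m : ℕ) (hm : (m:ℝ) ≠ 0) (hcard : Fintype.card V = m)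
    {a b c d : V} (hab : a ≠ b) (hcd : c ≠ d) :
    ⟪qvec m a b, qvec m c d⟫ = qvec m a b (c, d) - qvec m a b (d, c) := by
  have h0 := chi_sub_qvec_orth m (⊤ : SimpleGraph V) c d (qvec m a b)
    (qvec_mem m hm hcard hab)
  rw [inner_sub_left] at h0
  have h1 : ⟪qvec m a b, qvec m c d⟫ = ⟪qvec m a b, edgeChi c d⟫ := by
    have h2 := sub_eq_zero.mp h0
    calc ⟪qvec m a b, qvec m c d⟫ = ⟪qvec m c d, qvec m a b⟫ := real_inner_comm _ _
      _ = ⟪edgeChi c d, qvec m a b⟫ := h2.symm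
      _ = ⟪qvec m a b, edgeChi c d⟫ := real_inner_comm _ _
  rw [h1, inner_chi_right _ hcd]

/-- **Section 6.4: the crystal lattice of the complete graph `K_m`.** For `m ≥ 4`, every
projected edge vector has squared norm `2(m−2)/m`, and the normalized inner products of
two projected edge vectors are `1/(m−2)`, `−1/(m−2)`, `0` or `−1`, according to how the
two ordered pairs of endpoints overlap. -/
theorem completeGraph_proj_norm_and_inner
    {V : Type*} [Fintype V] [DecidableEq V] (m : ℕ) (hm : 4 ≤ m)
    (hcard : Fintype.card V = m)
    (G : SimpleGraph V) (hG : G = (⊤ : SimpleGraph V)) :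
    (∀ a b : V, a ≠ b → ‖projEdge G a b‖ ^ 2 = 2 * ((m : ℝ) - 2) / m) ∧
    (∀ a b c d : V, a ≠ b → c ≠ d →
      (((b = c ∧ a ≠ d) ∨ (a = d ∧ b ≠ c)) →
        ⟪projEdge G a b, projEdge G c d⟫ / (‖projEdge G a b‖ * ‖projEdge G c d‖)
          = 1 / ((m : ℝ) - 2)) ∧
      (((a = c ∧ b ≠ d) ∨ (b = d ∧ a ≠ c)) →
        ⟪projEdge G a b, projEdge G c d⟫ / (‖projEdge G a b‖ * ‖projEdge G c d‖)
          = -(1 / ((m : ℝ) - 2))) ∧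
      ((a ≠ c ∧ a ≠ d ∧ b ≠ c ∧ b ≠ d) →
        ⟪projEdge G a b, projEdge G c d⟫ / (‖projEdge G a b‖ * ‖projEdge G c d‖) = 0) ∧
      ((c = b ∧ d = a) →
        ⟪projEdge G a b, projEdge G c d⟫ / (‖projEdge G a b‖ * ‖projEdge G c d‖) = -1)) := by
  subst hG
  have hm4 : (4:ℝ) ≤ (m:ℝ) := by exact_mod_cast hm
  have hm0 : (m:ℝ) ≠ 0 := by intro h; rw [h] at hm4; norm_num at hm4
  have hm2 : (m:ℝ) - 2 ≠ 0 := by intro h; nlinarith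
  have hN : (0:ℝ) < 2 * ((m:ℝ) - 2) / m := by
    apply div_pos <;> nlinarith
  have hsq : ∀ a b : V, a ≠ b →
      ‖projEdge (⊤ : SimpleGraph V) a b‖ ^ 2 = 2 * ((m:ℝ) - 2) / m := by
    intro a b hab
    rw [← real_inner_self_eq_norm_sq, projEdge_eq m hm0 hcard hab,
      inner_qq m hm0 hcard hab hab]
    simp only [qvec, edgeChi, gfun, Prod.mk.injEq]
    simp [hab, hab.symm, Prod.ext_iff]
    field_simp
    ring
  have hmul : ∀ a b c d : V, a ≠ b → c ≠ d →
      ‖projEdge (⊤ : SimpleGraph V) a b‖ * ‖projEdge (⊤ : SimpleGraph V) c d‖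
        = 2 * ((m:ℝ) - 2) / m := by
    intro a b c d hab hcd
    have e1 : ‖projEdge (⊤ : SimpleGraph V) a b‖ = Real.sqrt (2 * ((m:ℝ) - 2) / m) := by
      rw [← hsq a b hab, Real.sqrt_sq (norm_nonneg _)]
    have e2 : ‖projEdge (⊤ : SimpleGraph V) c d‖ = Real.sqrt (2 * ((m:ℝ) - 2) / m) := by
      rw [← hsq c d hcd, Real.sqrt_sq (norm_nonneg _)]
    rw [e1, e2, Real.mul_self_sqrt hN.le]
  refine ⟨hsq, ?_⟩
  intro a b c d hab hcd
  have hI : ⟪projEdge (⊤ : SimpleGraph V) a b, projEdge (⊤ : SimpleGraph V) c d⟫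
      = qvec m a b (c, d) - qvec m a b (d, c) := by
    rw [projEdge_eq m hm0 hcard hab, projEdge_eq m hm0 hcard hcd,
      inner_qq m hm0 hcard hab hcd]
  refine ⟨?_, ?_, ?_, ?_⟩
  · rintro (⟨rfl, had⟩ | ⟨rfl, hbc⟩)
    · rw [hI, hmul _ _ _ _ hab hcd]
      simp only [qvec, edgeChi, gfun, Prod.mk.injEq]
      simp [hab, hab.symm, hcd, hcd.symm, had, had.symm, Prod.ext_iff]
      field_simp
      try ring
      try tauto
    · rw [hI, hmul _ _ _ _ hab hcd]
      simp only [qvec, edgeChi, gfun, Prod.mk.injEq]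
      simp [hab, hab.symm, hcd, hcd.symm, hbc, hbc.symm, Prod.ext_iff]
      field_simp
      try ring
      try tauto
  · rintro (⟨rfl, hbd⟩ | ⟨rfl, hac⟩)
    · rw [hI, hmul _ _ _ _ hab hcd]
      simp only [qvec, edgeChi, gfun, Prod.mk.injEq]
      simp [hab, hab.symm, hcd, hcd.symm, hbd, hbd.symm, Prod.ext_iff]
      field_simp
      try ring
      try tauto
    · rw [hI, hmul _ _ _ _ hab hcd]
      simp only [qvec, edgeChi, gfun, Prod.mk.injEq]
      simp [hab, hab.symm, hcd, hcd.symm, hac, hac.symm, Prod.ext_iff]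
      field_simp
      try ring
      try tauto
  · rintro ⟨hac, had, hbc, hbd⟩
    rw [hI]
    simp only [qvec, edgeChi, gfun, Prod.mk.injEq]
    simp [hab, hab.symm, hcd, hcd.symm, hac, hac.symm, had, had.symm,
      hbc, hbc.symm, hbd, hbd.symm, Prod.ext_iff]
  · rintro ⟨rfl, rfl⟩
    rw [hI, hmul _ _ _ _ hab hcd]
    simp only [qvec, edgeChi, gfun, Prod.mk.injEq]
    simp [hab, hab.symm, Prod.ext_iff]
    field_simp
    ring

end
end

section
/- Let m ≥ 5 and let G be the complete graph on a finite vertex set V with |V| = m. Fix an ordered pair (a,b) of distinct vertices and for each ordered pair (c,d) of distinct vertices let ι(c,d) = ⟨P χ_(a,b), P χ_(c,d)⟩ / (‖P χ_(a,b)‖·‖P χ_(c,d)‖). Then among the m(m−1) ordered pairs (c,d): exactly 1 has ι = 1 (namely (a,b) itself), exactly 1 has ι = −1 (namely (b,a)), exactly 2(m−2) have ι = 1/(m−2), exactly 2(m−2) have ι = −1/(m−2), and exactly (m−2)(m−3) have ι = 0. -/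
open scoped BigOperators RealInnerProductSpace

noncomputable section

variable {V : Type*} [Fintype V] [DecidableEq V]

namespace KmAux

def gfun (a b : V) : V → ℝ := fun v => (if v = a then 1 else 0) - (if v = b then 1 else 0)

def Fv (a b : V) : EuclideanSpace ℝ (V × V) :=
  WithLp.toLp 2 (fun p => edgeChi a b p - (gfun a b p.1 - gfun a b p.2) / (Fintype.card V : ℝ))

lemma edgeChi_eq2 (a b : V) (hab : a ≠ b) (p : V × V) :
    edgeChi a b p = (if p = (a,b) then 1 else 0) - (if p = (b,a) then 1 else 0) := by
  have hne : ((a, b) : V × V) ≠ (b, a) := fun h => hab (congrArg Prod.fst h)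
  by_cases h1 : p = (a, b)
  · subst h1; simp [edgeChi, hne]
  · by_cases h2 : p = (b, a)
    · subst h2; simp [edgeChi, hne.symm, h1]
    · simp [edgeChi, h1, h2]

lemma Fv_antisymm (a b : V) (hab : a ≠ b) (u v : V) : Fv a b (u, v) = - Fv a b (v, u) := by
  show edgeChi a b (u,v) - (gfun a b u - gfun a b v) / _
      = -(edgeChi a b (v,u) - (gfun a b v - gfun a b u) / _)
  rw [edgeChi_eq2 a b hab, edgeChi_eq2 a b hab]
  simp only [Prod.mk.injEq]
  split_ifs <;> first | ring1 | (exfalso; tauto)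

lemma sum_gfun (a b : V) : ∑ v : V, gfun a b v = 0 := by
  simp [gfun, Finset.sum_sub_distrib]

lemma Fv_mem (a b : V) (hab : a ≠ b) : Fv a b ∈ cycleSpace (⊤ : SimpleGraph V) := by
  have hne : ∀ v : V, ¬((v = a ∧ v = b)) := fun v h => hab (h.1 ▸ h.2 ▸ rfl)
  refine ⟨fun u v => Fv_antisymm a b hab u v, fun u v h => ?_, fun v => ?_⟩
  · have huv : u = v := by simpa using h
    subst huv
    show edgeChi a b (u,u) - (gfun a b u - gfun a b u) / _ = 0
    rw [edgeChi_eq2 a b hab]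
    simp only [Prod.mk.injEq]
    rw [if_neg (hne u), if_neg (fun h => hne u ⟨h.2, h.1⟩)]
    ring
  · have hsum : ∑ u : V, edgeChi a b (u, v) =
        (if v = b then 1 else 0) - (if v = a then 1 else 0) := by
      have : ∀ u : V, edgeChi a b (u, v)
          = (if u = a ∧ v = b then 1 else 0) - (if u = b ∧ v = a then 1 else 0) := by
        intro u
        rw [edgeChi_eq2 a b hab]
        simp [Prod.ext_iff]
      rw [Finset.sum_congr rfl fun u _ => this u, Finset.sum_sub_distrib]
      congr 1
      · by_cases hv : v = b
        · subst hv; simp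
        · simp [hv]
      · by_cases hv : v = a
        · subst hv; simp
        · simp [hv]
    show ∑ u : V, (edgeChi a b (u, v) - (gfun a b u - gfun a b v) / (Fintype.card V : ℝ)) = 0
    have hpos : (0:ℝ) < (Fintype.card V : ℝ) := by
      have : Nonempty V := ⟨a⟩
      exact_mod_cast Fintype.card_pos
    rw [Finset.sum_sub_distrib, hsum]
    have : ∑ u : V, (gfun a b u - gfun a b v) / (Fintype.card V : ℝ)
        = (∑ u : V, gfun a b u - (Fintype.card V : ℝ) * gfun a b v) / (Fintype.card V : ℝ) := by
      rw [← Finset.sum_div, Finset.sum_sub_distrib]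
      congr 2
      simp [Finset.card_univ, mul_comm]
    rw [this, sum_gfun]
    have hg : gfun a b v = (if v = a then 1 else 0) - (if v = b then 1 else 0) := rfl
    field_simp [hg]
    rw [hg]
    ring

lemma orth (a b : V) : ∀ w ∈ cycleSpace (⊤ : SimpleGraph V), ⟪edgeChi a b - Fv a b, w⟫ = 0 := by
  rintro w ⟨hw1, hw2, hw3⟩
  have hb : ∀ u : V, ∑ v : V, w (u, v) = 0 := by
    intro u
    have : ∑ v : V, w (u, v) = ∑ v : V, -w (v, u) :=
      Finset.sum_congr rfl fun v _ => hw1 u v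
    rw [this, Finset.sum_neg_distrib, hw3 u, neg_zero]
  have happ : ∀ p : V × V, (edgeChi a b - Fv a b) p
      = (gfun a b p.1 - gfun a b p.2) / (Fintype.card V : ℝ) := by
    intro p
    show edgeChi a b p - (edgeChi a b p - _) = _
    ring
  rw [PiLp.inner_apply]
  simp only [RCLike.inner_apply, conj_trivial]
  rw [Finset.sum_congr rfl fun p _ => by rw [happ p]]
  rw [Fintype.sum_prod_type]
  have key : ∀ u v : V, (gfun a b u - gfun a b v) / (Fintype.card V : ℝ) * w (u, v)
      = (gfun a b u * w (u, v)) / (Fintype.card V : ℝ)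
        - (gfun a b v * w (u, v)) / (Fintype.card V : ℝ) := by
    intro u v; ring
  rw [show (∑ x : V, ∑ y : V, w (x, y) * ((gfun a b (x, y).1 - gfun a b (x, y).2) / (Fintype.card V : ℝ))) = ∑ u : V, ∑ v : V, (gfun a b u - gfun a b v) / (Fintype.card V : ℝ) * w (u, v) from Finset.sum_congr rfl fun u _ => Finset.sum_congr rfl fun v _ => mul_comm _ _]
  calc ∑ u : V, ∑ v : V, (gfun a b u - gfun a b v) / (Fintype.card V : ℝ) * w (u, v)
      = ∑ u : V, ∑ v : V, ((gfun a b u * w (u, v)) / (Fintype.card V : ℝ)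
          - (gfun a b v * w (u, v)) / (Fintype.card V : ℝ)) := by
        exact Finset.sum_congr rfl fun u _ => Finset.sum_congr rfl fun v _ => key u v
    _ = ∑ u : V, ((∑ v : V, (gfun a b u * w (u, v)) / (Fintype.card V : ℝ))
          - ∑ v : V, (gfun a b v * w (u, v)) / (Fintype.card V : ℝ)) := by
        exact Finset.sum_congr rfl fun u _ => Finset.sum_sub_distrib _ _
    _ = (∑ u : V, ∑ v : V, (gfun a b u * w (u, v)) / (Fintype.card V : ℝ))
          - ∑ u : V, ∑ v : V, (gfun a b v * w (u, v)) / (Fintype.card V : ℝ) :=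
        Finset.sum_sub_distrib _ _
    _ = 0 - 0 := by
        congr 1
        · refine Finset.sum_eq_zero fun u _ => ?_
          rw [← Finset.sum_div, ← Finset.mul_sum, hb u]
          simp
        · rw [Finset.sum_comm]
          refine Finset.sum_eq_zero fun v _ => ?_
          rw [← Finset.sum_div, ← Finset.mul_sum, hw3 v]
          simp
    _ = 0 := by ring

lemma proj_eq (a b : V) (hab : a ≠ b) : projEdge (⊤ : SimpleGraph V) a b = Fv a b :=
  by rw [projEdge, ← Submodule.starProjection_apply]; exact Submodule.eq_starProjection_of_mem_of_inner_eq_zero (Fv_mem a b hab) (orth a b)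

lemma inner_edgeChi (a b : V) (hab : a ≠ b) (y : EuclideanSpace ℝ (V × V)) :
    ⟪edgeChi a b, y⟫ = y (a, b) - y (b, a) := by
  rw [PiLp.inner_apply]
  simp only [RCLike.inner_apply, conj_trivial]
  have key : ∀ p : V × V, edgeChi a b p * y p
      = (if p = (a,b) then y p else 0) - (if p = (b,a) then y p else 0) := by
    intro p
    rw [edgeChi_eq2 a b hab]
    split_ifs <;> ring
  rw [Finset.sum_congr rfl fun p _ => (mul_comm _ _).trans (key p), Finset.sum_sub_distrib]
  simp

lemma inner_FF (a b c d : V) (hab : a ≠ b) (hcd : c ≠ d) :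
    ⟪Fv a b, Fv c d⟫ = 2 * Fv c d (a, b) := by
  have h1 : ⟪edgeChi a b - Fv a b, Fv c d⟫ = 0 := orth a b _ (Fv_mem c d hcd)
  rw [inner_sub_left] at h1
  have h2 : ⟪Fv a b, Fv c d⟫ = ⟪edgeChi a b, Fv c d⟫ := by linarith
  rw [h2, inner_edgeChi a b hab]
  have h3 := Fv_antisymm c d hcd a b
  linarith [h3]

lemma Fv_self (c d : V) (hcd : c ≠ d) : Fv c d (c, d) = 1 - 2 / (Fintype.card V : ℝ) := by
  show edgeChi c d (c,d) - (gfun c d c - gfun c d d) / _ = _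
  rw [edgeChi_eq2 c d hcd]
  have h1 : ((c,d) : V × V) ≠ (d,c) := fun h => hcd (congrArg Prod.fst h)
  rw [if_pos rfl, if_neg h1]
  simp [gfun, hcd, hcd.symm]
  ring

lemma norm_Fv (c d : V) (hcd : c ≠ d) :
    ‖Fv c d‖ = Real.sqrt (2 - 4 / (Fintype.card V : ℝ)) := by
  rw [norm_eq_sqrt_real_inner]
  congr 1
  rw [inner_FF c d c d hcd hcd, Fv_self c d hcd]
  ring

lemma Fv_value (c d u v : V) (hcd : c ≠ d) :
    Fv c d (u, v) = (if u = c ∧ v = d then 1 else 0) - (if u = d ∧ v = c then 1 else 0)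
      - (((if u = c then (1:ℝ) else 0) - (if u = d then 1 else 0))
          - ((if v = c then 1 else 0) - (if v = d then 1 else 0))) / (Fintype.card V : ℝ) := by
  show edgeChi c d (u,v) - (gfun c d u - gfun c d v) / _ = _
  rw [edgeChi_eq2 c d hcd]
  simp only [Prod.mk.injEq, gfun]

end KmAux

open Classical in
/-- **Section 6.4: distance distribution for the complete graph `K_m`.** Fix an ordered
pair `(a,b)` of distinct vertices. Among the `m(m−1)` ordered pairs `(c,d)` of distinct
vertices, exactly 1 has normalized inner product `1` with `(a,b)`, exactly 1 has `−1`,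
exactly `2(m−2)` have `1/(m−2)`, exactly `2(m−2)` have `−1/(m−2)`, and exactly
`(m−2)(m−3)` have `0`. -/
theorem completeGraph_inner_distribution
    {V : Type*} [Fintype V] [DecidableEq V] (m : ℕ) (hm : 5 ≤ m)
    (hcard : Fintype.card V = m)
    (G : SimpleGraph V) (hG : G = (⊤ : SimpleGraph V))
    (a b : V) (hab : a ≠ b)
    (ι : V × V → ℝ)
    (hι : ∀ p : V × V, ι p =
      ⟪projEdge G a b, projEdge G p.1 p.2⟫ / (‖projEdge G a b‖ * ‖projEdge G p.1 p.2‖)) :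
    ((Finset.univ.filter fun p : V × V => p.1 ≠ p.2 ∧ ι p = 1).card = 1) ∧
    ((Finset.univ.filter fun p : V × V => p.1 ≠ p.2 ∧ ι p = -1).card = 1) ∧
    ((Finset.univ.filter fun p : V × V => p.1 ≠ p.2 ∧ ι p = 1 / ((m : ℝ) - 2)).card
        = 2 * (m - 2)) ∧
    ((Finset.univ.filter fun p : V × V => p.1 ≠ p.2 ∧ ι p = -(1 / ((m : ℝ) - 2))).card
        = 2 * (m - 2)) ∧
    ((Finset.univ.filter fun p : V × V => p.1 ≠ p.2 ∧ ι p = 0).card = (m - 2) * (m - 3)) := by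
  classical
  subst hG
  have hM : (5:ℝ) ≤ (m:ℝ) := by exact_mod_cast hm
  have hM0 : (m:ℝ) ≠ 0 := by linarith
  have hM2 : (m:ℝ) - 2 ≠ 0 := by linarith
  have hden0 : (0:ℝ) < 2 - 4 / (m:ℝ) := by
    have h1 : 4 / (m:ℝ) ≤ 1 := by
      rw [div_le_one (by linarith)]; linarith
    linarith
  have hden : (2:ℝ) - 4 / (m:ℝ) ≠ 0 := ne_of_gt hden0
  have hpos : (0:ℝ) < 1 / ((m:ℝ) - 2) := by apply div_pos one_pos; linarith
  have hlt : 1 / ((m:ℝ) - 2) < 1 := by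
    rw [div_lt_one (by linarith)]; linarith
  have hcR : (Fintype.card V : ℝ) = (m:ℝ) := by rw [hcard]
  have hval : ∀ c d : V, c ≠ d →
      ι (c, d) = 2 * KmAux.Fv c d (a, b) / (2 - 4 / (m:ℝ)) := by
    intro c d hcd
    have h := hι (c, d)
    dsimp only at h
    rw [h, KmAux.proj_eq a b hab, KmAux.proj_eq c d hcd,
      KmAux.inner_FF a b c d hab hcd, KmAux.norm_Fv a b hab, KmAux.norm_Fv c d hcd, hcR,
      Real.mul_self_sqrt (le_of_lt hden0)]
  have hiota : ∀ c d : V, c ≠ d → ι (c, d) =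
      (if c = a ∧ d = b then 1 else if c = b ∧ d = a then -1
        else if c = b ∨ d = a then 1 / ((m:ℝ) - 2)
        else if c = a ∨ d = b then -(1 / ((m:ℝ) - 2)) else 0) := by
    intro c d hcd
    rw [hval c d hcd]
    split_ifs with h1 h2 h3 h4
    · obtain ⟨rfl, rfl⟩ := h1
      rw [KmAux.Fv_self c d hcd, hcR]
      rw [div_eq_one_iff_eq hden]
      ring
    · obtain ⟨rfl, rfl⟩ := h2
      have hv : KmAux.Fv c d (d, c) = -(1 - 2 / ((m:ℝ))) := by
        rw [KmAux.Fv_antisymm c d hcd d c, KmAux.Fv_self c d hcd, hcR]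
      rw [hv, div_eq_iff hden]
      ring
    · have hv : KmAux.Fv c d (a, b) = 1 / (m:ℝ) := by
        rcases h3 with hcb | hda
        · have f1 : a ≠ c := fun h => hab (h.trans hcb)
          have f2 : a ≠ d := fun h => h2 ⟨hcb, h.symm⟩
          have f3 : b = c := hcb.symm
          have f4 : b ≠ d := fun h => hcd (hcb.trans h)
          rw [KmAux.Fv_value c d a b hcd, hcR]
          simp [f1, f2, f3, f4, hcd, Ne.symm hcd]
          ring
        · have f1 : a ≠ c := fun h => hcd (h.symm.trans hda.symm)
          have f2 : a = d := hda.symm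
          have f3 : b ≠ c := fun h => h2 ⟨h.symm, hda⟩
          have f4 : b ≠ d := fun h => hab ((h.trans hda).symm)
          rw [KmAux.Fv_value c d a b hcd, hcR]
          simp [f1, f2, f3, f4, hcd, Ne.symm hcd]
          ring
      rw [hv, div_eq_div_iff hden hM2]
      field_simp
      ring
    · push_neg at h3
      have hv : KmAux.Fv c d (a, b) = -(1 / (m:ℝ)) := by
        rcases h4 with hca | hdb
        · have f1 : a = c := hca.symm
          have f2 : a ≠ d := Ne.symm h3.2
          have f3 : b ≠ c := fun h => hab (h.trans hca).symm
          have f4 : b ≠ d := fun h => h1 ⟨hca, h.symm⟩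
          rw [KmAux.Fv_value c d a b hcd, hcR]
          simp [f1, f2, f3, f4, hcd, Ne.symm hcd]
        · have f1 : a ≠ c := fun h => h1 ⟨h.symm, hdb⟩
          have f2 : a ≠ d := fun h => hab (h.trans hdb)
          have f3 : b ≠ c := Ne.symm h3.1
          have f4 : b = d := hdb.symm
          rw [KmAux.Fv_value c d a b hcd, hcR]
          simp [f1, f2, f3, f4, hcd, Ne.symm hcd]
      rw [hv, div_eq_iff hden]
      field_simp
      ring
    · push_neg at h3 h4
      have hv : KmAux.Fv c d (a, b) = 0 := by
        rw [KmAux.Fv_value c d a b hcd, hcR]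
        simp [Ne.symm h4.1, Ne.symm h3.1, Ne.symm h3.2, Ne.symm h4.2]
      rw [hv]
      simp
  have hsd : (Finset.univ \ {a, b} : Finset V).card = m - 2 := by
    rw [Finset.card_sdiff_of_subset (Finset.subset_univ _), Finset.card_univ, hcard, Finset.card_pair hab]
  refine ⟨?_, ?_, ?_, ?_, ?_⟩
  · have hset : (Finset.univ.filter fun p : V × V => p.1 ≠ p.2 ∧ ι p = 1) = {(a, b)} := by
      ext ⟨c, d⟩
      simp only [Finset.mem_filter, Finset.mem_univ, true_and, Finset.mem_singleton,
        Prod.mk.injEq]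
      constructor
      · rintro ⟨hcd, hv⟩
        rw [hiota c d hcd] at hv
        split_ifs at hv with h1 h2 h3 h4
        · exact h1
        · linarith
        · linarith
        · linarith
        · linarith
      · rintro ⟨rfl, rfl⟩
        exact ⟨hab, by rw [hiota c d hab]; simp⟩
    rw [hset, Finset.card_singleton]
  · have hset : (Finset.univ.filter fun p : V × V => p.1 ≠ p.2 ∧ ι p = -1) = {(b, a)} := by
      ext ⟨c, d⟩
      simp only [Finset.mem_filter, Finset.mem_univ, true_and, Finset.mem_singleton,
        Prod.mk.injEq]
      constructor
      · rintro ⟨hcd, hv⟩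
        rw [hiota c d hcd] at hv
        split_ifs at hv with h1 h2 h3 h4
        · linarith
        · exact h2
        · linarith
        · linarith
        · linarith
      · rintro ⟨rfl, rfl⟩
        exact ⟨hab.symm, by rw [hiota c d hab.symm]; simp [hab, hab.symm]⟩
    rw [hset, Finset.card_singleton]
  · have hset : (Finset.univ.filter fun p : V × V => p.1 ≠ p.2 ∧ ι p = 1 / ((m:ℝ) - 2))
        = (({b} : Finset V) ×ˢ (Finset.univ \ {a, b})) ∪ ((Finset.univ \ {a, b}) ×ˢ ({a} : Finset V)) := by
      ext ⟨c, d⟩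
      simp only [Finset.mem_filter, Finset.mem_univ, true_and, Finset.mem_union,
        Finset.mem_product, Finset.mem_sdiff, Finset.mem_singleton, Finset.mem_insert, not_or]
      constructor
      · rintro ⟨hcd, hv⟩
        rw [hiota c d hcd] at hv
        split_ifs at hv with h1 h2 h3 h4
        · linarith
        · linarith
        · rcases h3 with hcb | hda
          · exact Or.inl ⟨hcb, fun h => h2 ⟨hcb, h⟩, fun h => hcd (hcb.trans h.symm)⟩
          · exact Or.inr ⟨⟨fun h => hcd (h.trans hda.symm), fun h => h2 ⟨h, hda⟩⟩, hda⟩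
        · linarith
        · linarith
      · rintro (⟨hcb, hd1, hd2⟩ | ⟨⟨hc1, hc2⟩, hda⟩)
        · have hcd : c ≠ d := fun h => hd2 (h.symm.trans hcb)
          refine ⟨hcd, ?_⟩
          rw [hiota c d hcd, if_neg (fun h => hab (h.1.symm.trans hcb)),
            if_neg (fun h => hd1 h.2), if_pos (Or.inl hcb)]
        · have hcd : c ≠ d := fun h => hc1 (h.trans hda)
          refine ⟨hcd, ?_⟩
          rw [hiota c d hcd, if_neg (fun h => hc1 h.1), if_neg (fun h => hc2 h.1),
            if_pos (Or.inr hda)]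
    have hdisj : Disjoint (({b} : Finset V) ×ˢ (Finset.univ \ {a, b}))
        ((Finset.univ \ {a, b}) ×ˢ ({a} : Finset V)) := by
      rw [Finset.disjoint_left]
      rintro ⟨c, d⟩ hp hq
      simp only [Finset.mem_product, Finset.mem_sdiff, Finset.mem_singleton, Finset.mem_univ,
        true_and, Finset.mem_insert, not_or] at hp hq
      tauto
    rw [hset]
    simp only [Finset.card_union_of_disjoint hdisj, Finset.card_product,
      Finset.card_singleton, hsd]
    omega
  · have hset : (Finset.univ.filter fun p : V × V => p.1 ≠ p.2 ∧ ι p = -(1 / ((m:ℝ) - 2)))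
        = (({a} : Finset V) ×ˢ (Finset.univ \ {a, b})) ∪ ((Finset.univ \ {a, b}) ×ˢ ({b} : Finset V)) := by
      ext ⟨c, d⟩
      simp only [Finset.mem_filter, Finset.mem_univ, true_and, Finset.mem_union,
        Finset.mem_product, Finset.mem_sdiff, Finset.mem_singleton, Finset.mem_insert, not_or]
      constructor
      · rintro ⟨hcd, hv⟩
        rw [hiota c d hcd] at hv
        split_ifs at hv with h1 h2 h3 h4
        · linarith
        · linarith
        · linarith
        · push_neg at h3
          rcases h4 with hca | hdb
          · exact Or.inl ⟨hca, h3.2, fun h => h1 ⟨hca, h⟩⟩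
          · exact Or.inr ⟨⟨fun h => h1 ⟨h, hdb⟩, h3.1⟩, hdb⟩
        · linarith
      · rintro (⟨hca, hd1, hd2⟩ | ⟨⟨hc1, hc2⟩, hdb⟩)
        · have hcd : c ≠ d := fun h => hd1 (h.symm.trans hca)
          refine ⟨hcd, ?_⟩
          rw [hiota c d hcd, if_neg (fun h => hd2 h.2),
            if_neg (fun h => hab (hca.symm.trans h.1)),
            if_neg (fun h => h.elim (fun h' => hab (hca.symm.trans h')) hd1),
            if_pos (Or.inl hca)]
        · have hcd : c ≠ d := fun h => hc2 (h.trans hdb)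
          refine ⟨hcd, ?_⟩
          rw [hiota c d hcd, if_neg (fun h => hc1 h.1), if_neg (fun h => hc2 h.1),
            if_neg (fun h => h.elim hc2 (fun h' => hab (h'.symm.trans hdb))),
            if_pos (Or.inr hdb)]
    have hdisj : Disjoint (({a} : Finset V) ×ˢ (Finset.univ \ {a, b}))
        ((Finset.univ \ {a, b}) ×ˢ ({b} : Finset V)) := by
      rw [Finset.disjoint_left]
      rintro ⟨c, d⟩ hp hq
      simp only [Finset.mem_product, Finset.mem_sdiff, Finset.mem_singleton, Finset.mem_univ,
        true_and, Finset.mem_insert, not_or] at hp hq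
      tauto
    rw [hset]
    simp only [Finset.card_union_of_disjoint hdisj, Finset.card_product,
      Finset.card_singleton, hsd]
    omega
  · have hset : (Finset.univ.filter fun p : V × V => p.1 ≠ p.2 ∧ ι p = 0)
        = (Finset.univ \ ({a, b} : Finset V)).offDiag := by
      ext ⟨c, d⟩
      simp only [Finset.mem_filter, Finset.mem_univ, true_and, Finset.mem_offDiag,
        Finset.mem_sdiff, Finset.mem_singleton, Finset.mem_insert, not_or]
      constructor
      · rintro ⟨hcd, hv⟩
        rw [hiota c d hcd] at hv
        split_ifs at hv with h1 h2 h3 h4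
        · linarith
        · linarith
        · linarith
        · linarith
        · push_neg at h3 h4
          exact ⟨⟨h4.1, h3.1⟩, ⟨h3.2, h4.2⟩, hcd⟩
      · rintro ⟨⟨hc1, hc2⟩, ⟨hd1, hd2⟩, hcd⟩
        refine ⟨hcd, ?_⟩
        rw [hiota c d hcd, if_neg (fun h => hc1 h.1), if_neg (fun h => hc2 h.1),
          if_neg (fun h => h.elim hc2 hd1), if_neg (fun h => h.elim hc1 hd2)]
    rw [hset, Finset.offDiag_card, hsd]
    have h32 : m - 3 = m - 2 - 1 := by omega
    rw [h32, Nat.mul_sub_one]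

end
end
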